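/- Let p be a prime and k, N, s ≥ 1 integers. Then in ℚ_p: (p^k·N)^s · H_{p^k N}(s) = N^s · H_N(s) + ∑_{l ≥ 0} binom(−s,l) · N^s · (∑_{0 ≤ n < N} n^l) · (p^k)^{s+l} · H_{p^k}(s+l), the family indexed by l ≥ 0 being summable in ℚ_p. -/

import Mathlib

open Finset

/-- The generalized binomial coefficient `binom(−s,l) = (−1)^l · C(s+l−1, l) ∈ ℤ`. -/
def negBinom (s l : ℕ) : ℤ := (-1) ^ l * (Nat.choose (s + l - 1) l : ℤ)

/-- The depth-one multiple harmonic sum `H_N(s) = ∑_{0<n<N} 1/n^s`, viewed in `ℚ_p`. -/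
noncomputable def H1 (p : ℕ) [Fact p.Prime] (N s : ℕ) : ℚ_[p] :=
  ∑ n ∈ Finset.Ioo 0 N, 1 / (n : ℚ_[p]) ^ s



lemma choose_sum (s l : ℕ) :
    ∑ i ∈ range (l + 1), Nat.choose (s + i - 1) i = Nat.choose (s + l) l := by
  induction l with
  | zero => simp
  | succ l ih =>
    rw [sum_range_succ, ih]
    have h1 : s + (l + 1) - 1 = s + l := by omega
    have h2 : s + (l + 1) = (s + l) + 1 := by omega
    rw [h1, h2, Nat.choose_succ_succ]

variable {p : ℕ} [Fact p.Prime]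

lemma summable_norm_negBinom (s : ℕ) {x : ℚ_[p]} (hx : ‖x‖ < 1) :
    Summable (fun l : ℕ => ‖(negBinom s l : ℚ_[p]) * x ^ l‖) := by
  apply Summable.of_nonneg_of_le (fun _ => norm_nonneg _) (fun l => ?_)
    (summable_geometric_of_lt_one (norm_nonneg x) hx)
  rw [norm_mul, norm_pow]
  exact mul_le_of_le_one_left (pow_nonneg (norm_nonneg x) l) (Padic.norm_int_le_one _)

lemma summable_negBinom (s : ℕ) {x : ℚ_[p]} (hx : ‖x‖ < 1) :
    Summable (fun l : ℕ => ((negBinom s l : ℚ_[p]) * x ^ l)) :=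
  (summable_norm_negBinom s hx).of_norm

lemma tsum_negBinom (s : ℕ) {x : ℚ_[p]} (hx : ‖x‖ < 1) :
    (∑' l : ℕ, (negBinom s l : ℚ_[p]) * x ^ l) = ((1 + x) ^ s)⁻¹ := by
  induction s with
  | zero =>
    have : (fun l : ℕ => (negBinom 0 l : ℚ_[p]) * x ^ l)
        = fun l : ℕ => if l = 0 then 1 else 0 := by
      funext l
      cases l with
      | zero => simp [negBinom]
      | succ n => simp [negBinom, Nat.choose_eq_zero_of_lt (by omega : n + 1 - 1 < n + 1)]
    rw [this, tsum_ite_eq]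
    simp
  | succ s ih =>
    have hx' : ‖-x‖ < 1 := by rwa [norm_neg]
    have hne : (1 : ℚ_[p]) + x ≠ 0 := by
      intro h
      have : x = -1 := by linear_combination h
      rw [this] at hx; simp at hx
    have hgeo : (∑' l : ℕ, (-x) ^ l) = (1 + x)⁻¹ := by
      rw [tsum_geometric_of_norm_lt_one hx', sub_neg_eq_add]
    have hgsum : Summable (fun l : ℕ => ‖(-x) ^ l‖) := by
      simpa [norm_pow] using summable_geometric_of_lt_one (norm_nonneg x) hx
    have hcauchy := tsum_mul_tsum_eq_tsum_sum_antidiagonal_of_summable_norm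
      (summable_norm_negBinom (p := p) s hx) hgsum
    have key : ∀ n : ℕ, ∑ kl ∈ Finset.HasAntidiagonal.antidiagonal n,
        ((negBinom s kl.1 : ℚ_[p]) * x ^ kl.1) * (-x) ^ kl.2
        = (negBinom (s + 1) n : ℚ_[p]) * x ^ n := by
      intro n
      rw [Finset.Nat.sum_antidiagonal_eq_sum_range_succ_mk]
      have step : ∀ k ∈ range (n + 1),
          ((negBinom s k : ℚ_[p]) * x ^ k) * (-x) ^ (n - k)
          = ((-1) ^ n * x ^ n) * (Nat.choose (s + k - 1) k : ℚ_[p]) := by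
        intro k hk
        have hkn : k + (n - k) = n := by
          have := Finset.mem_range.mp hk; omega
        have e1 : ((-x) : ℚ_[p]) ^ (n - k) = (-1) ^ (n - k) * x ^ (n - k) := by
          rw [neg_pow]
        rw [e1]
        have : (negBinom s k : ℚ_[p]) = (-1) ^ k * (Nat.choose (s + k - 1) k : ℚ_[p]) := by
          simp [negBinom]
        rw [this]
        calc (-1 : ℚ_[p]) ^ k * (Nat.choose (s + k - 1) k : ℚ_[p]) * x ^ k
              * ((-1) ^ (n - k) * x ^ (n - k))
            = ((-1) ^ (k + (n - k)) * x ^ (k + (n - k)))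
              * (Nat.choose (s + k - 1) k : ℚ_[p]) := by
              rw [pow_add, pow_add]; ring
          _ = ((-1) ^ n * x ^ n) * (Nat.choose (s + k - 1) k : ℚ_[p]) := by rw [hkn]
      rw [Finset.sum_congr rfl step, ← Finset.mul_sum]
      have hsum : (∑ k ∈ range (n + 1), (Nat.choose (s + k - 1) k : ℚ_[p]))
          = (Nat.choose (s + n) n : ℚ_[p]) := by
        rw [← Nat.cast_sum, choose_sum]
      rw [hsum]
      have : (negBinom (s + 1) n : ℚ_[p]) = (-1) ^ n * (Nat.choose (s + n) n : ℚ_[p]) := by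
        have h3 : s + 1 + n - 1 = s + n := by omega
        simp [negBinom, h3]
      rw [this]; ring
    calc (∑' l : ℕ, (negBinom (s + 1) l : ℚ_[p]) * x ^ l)
        = ∑' n : ℕ, ∑ kl ∈ Finset.HasAntidiagonal.antidiagonal n,
            ((negBinom s kl.1 : ℚ_[p]) * x ^ kl.1) * (-x) ^ kl.2 :=
          (tsum_congr key).symm
      _ = (∑' l : ℕ, (negBinom s l : ℚ_[p]) * x ^ l) * (∑' l : ℕ, (-x) ^ l) := hcauchy.symm
      _ = ((1 + x) ^ s)⁻¹ * (1 + x)⁻¹ := by rw [ih, hgeo]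
      _ = ((1 + x) ^ (s + 1))⁻¹ := by rw [pow_succ, mul_inv]



variable {p : ℕ} [Fact p.Prime]

lemma pair_norm_lt {k r : ℕ} (hr : 0 < r) (hrP : r < p ^ k) (m : ℕ) :
    ‖(p : ℚ_[p]) ^ k * (m : ℚ_[p]) / (r : ℚ_[p])‖ < 1 := by
  have hp := (Fact.out (p := p.Prime))
  have hrne : ((r : ℚ_[p])) ≠ 0 := Nat.cast_ne_zero.mpr hr.ne'
  have hnum : ‖(p : ℚ_[p]) ^ k * (m : ℚ_[p])‖ ≤ (p : ℝ) ^ (-(k : ℤ)) := by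
    rw [norm_mul, Padic.norm_p_pow]
    have hm : ‖((m : ℤ) : ℚ_[p])‖ ≤ 1 := Padic.norm_int_le_one _
    rw [Int.cast_natCast] at hm
    exact mul_le_of_le_one_right (by positivity) hm
  have hden : (p : ℝ) ^ (-(k : ℤ)) < ‖(r : ℚ_[p])‖ := by
    by_contra h
    push_neg at h
    have h2 : ‖((r : ℤ) : ℚ_[p])‖ ≤ (p : ℝ) ^ (-(k : ℤ)) := by rwa [Int.cast_natCast]
    have := (Padic.norm_int_le_pow_iff_dvd (r : ℤ) k).mp h2
    have hdvd : p ^ k ∣ r := by exact_mod_cast this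
    exact absurd (Nat.le_of_dvd hr hdvd) (by omega)
  rw [norm_div, div_lt_one (lt_of_le_of_lt (by positivity) hden)]
  exact lt_of_le_of_lt hnum hden

lemma H1_eq_range (M s : ℕ) (hs : s ≠ 0) :
    H1 p M s = ∑ n ∈ range M, 1 / (n : ℚ_[p]) ^ s := by
  rw [H1]
  apply Finset.sum_subset
  · intro x hx
    simp only [mem_Ioo] at hx
    exact mem_range.mpr hx.2
  · intro x hx hnx
    simp only [mem_range] at hx
    simp only [mem_Ioo] at hnx
    have : x = 0 := by omega
    subst this
    simp [zero_pow hs]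

lemma sum_range_mul' {M : Type*} [AddCommMonoid M] (F : ℕ → M) (N P : ℕ) :
    ∑ n ∈ range (N * P), F n = ∑ m ∈ range N, ∑ r ∈ range P, F (P * m + r) := by
  induction N with
  | zero => simp
  | succ N ih =>
    rw [Nat.succ_mul, Finset.sum_range_add, ih, sum_range_succ]
    congr 1
    exact Finset.sum_congr rfl fun r _ => by rw [Nat.mul_comm]

lemma range_split {P : ℕ} (hP : 0 < P) (G : ℕ → ℚ_[p]) :
    ∑ r ∈ range P, G r = G 0 + ∑ r ∈ Ioo 0 P, G r := by
  have h : Ioo 0 P = (range P).erase 0 := by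
    ext x
    simp only [mem_Ioo, mem_erase, mem_range]
    omega
  rw [h, Finset.add_sum_erase _ G (mem_range.mpr hP)]

/-- The elementary summand. -/
noncomputable def eAux (p : ℕ) [Fact p.Prime] (k N s m r l : ℕ) : ℚ_[p] :=
  (N : ℚ_[p]) ^ s * ((p : ℚ_[p]) ^ k) ^ s * ((r : ℚ_[p]) ^ s)⁻¹ *
    ((negBinom s l : ℚ_[p]) * ((p : ℚ_[p]) ^ k * (m : ℚ_[p]) / (r : ℚ_[p])) ^ l)

theorem depth_one_multiplication (p : ℕ) [Fact p.Prime] (k N s : ℕ)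
    (hk : 1 ≤ k) (hN : 1 ≤ N) (hs : 1 ≤ s) :
    Summable (fun l : ℕ => (negBinom s l : ℚ_[p]) * (N : ℚ_[p]) ^ s *
        (∑ n ∈ Finset.range N, (n : ℚ_[p]) ^ l) * ((p : ℚ_[p]) ^ k) ^ (s + l) *
        H1 p (p ^ k) (s + l)) ∧
    ((p : ℚ_[p]) ^ k * (N : ℚ_[p])) ^ s * H1 p (p ^ k * N) s
      = (N : ℚ_[p]) ^ s * H1 p N s +
        ∑' l : ℕ, (negBinom s l : ℚ_[p]) * (N : ℚ_[p]) ^ s *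
          (∑ n ∈ Finset.range N, (n : ℚ_[p]) ^ l) * ((p : ℚ_[p]) ^ k) ^ (s + l) *
          H1 p (p ^ k) (s + l) := by
  have hp : p.Prime := Fact.out
  have hP1 : 0 < p ^ k := pow_pos hp.pos k
  have hs0 : s ≠ 0 := by omega
  have hpne : ((p : ℚ_[p])) ≠ 0 := Nat.cast_ne_zero.mpr hp.pos.ne'
  have hrne : ∀ r ∈ Ioo 0 (p ^ k), ((r : ℚ_[p])) ≠ 0 := fun r hr =>
    Nat.cast_ne_zero.mpr (mem_Ioo.mp hr).1.ne'
  -- step 1: rewrite the summand as a finite double sum of eAux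
  have hf : (fun l : ℕ => (negBinom s l : ℚ_[p]) * (N : ℚ_[p]) ^ s *
        (∑ n ∈ Finset.range N, (n : ℚ_[p]) ^ l) * ((p : ℚ_[p]) ^ k) ^ (s + l) *
        H1 p (p ^ k) (s + l))
      = fun l : ℕ => ∑ m ∈ range N, ∑ r ∈ Ioo 0 (p ^ k), eAux p k N s m r l := by
    funext l
    rw [H1]
    simp only [Finset.mul_sum, Finset.sum_mul]
    rw [Finset.sum_comm]
    refine Finset.sum_congr rfl fun m _ => Finset.sum_congr rfl fun r hr => ?_
    have hr0 := hrne r hr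
    rw [eAux, div_pow, mul_pow, pow_add, pow_add]
    field_simp
  have hxlt : ∀ (m : ℕ), ∀ r ∈ Ioo 0 (p ^ k),
      ‖(p : ℚ_[p]) ^ k * (m : ℚ_[p]) / (r : ℚ_[p])‖ < 1 := fun m r hr =>
    pair_norm_lt (mem_Ioo.mp hr).1 (mem_Ioo.mp hr).2 m
  have hsum : ∀ m ∈ range N, ∀ r ∈ Ioo 0 (p ^ k), Summable (fun l => eAux p k N s m r l) :=
    fun m _ r hr => (summable_negBinom s (hxlt m r hr)).mul_left _
  constructor
  · rw [hf]
    exact summable_sum fun m hm => summable_sum fun r hr => hsum m hm r hr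
  · rw [hf]
    have ht : (∑' l : ℕ, ∑ m ∈ range N, ∑ r ∈ Ioo 0 (p ^ k), eAux p k N s m r l)
        = ∑ m ∈ range N, ∑ r ∈ Ioo 0 (p ^ k),
            (N : ℚ_[p]) ^ s * ((p : ℚ_[p]) ^ k) ^ s *
              (((r : ℚ_[p]) + (p : ℚ_[p]) ^ k * (m : ℚ_[p])) ^ s)⁻¹ := by
      rw [Summable.tsum_finsetSum fun m hm => summable_sum fun r hr => hsum m hm r hr]
      refine Finset.sum_congr rfl fun m hm => ?_
      rw [Summable.tsum_finsetSum fun r hr => hsum m hm r hr]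
      refine Finset.sum_congr rfl fun r hr => ?_
      rw [show (fun l => eAux p k N s m r l) = fun l =>
        ((N : ℚ_[p]) ^ s * ((p : ℚ_[p]) ^ k) ^ s * ((r : ℚ_[p]) ^ s)⁻¹) *
          ((negBinom s l : ℚ_[p]) * ((p : ℚ_[p]) ^ k * (m : ℚ_[p]) / (r : ℚ_[p])) ^ l)
        from funext fun l => by rw [eAux]]
      rw [tsum_mul_left, tsum_negBinom s (hxlt m r hr)]
      have hr0 := hrne r hr
      have key : (r : ℚ_[p]) + (p : ℚ_[p]) ^ k * (m : ℚ_[p])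
          = (r : ℚ_[p]) * (1 + (p : ℚ_[p]) ^ k * (m : ℚ_[p]) / (r : ℚ_[p])) := by
        field_simp
      rw [key, mul_pow, mul_inv]
      ring
    rw [ht, H1_eq_range (p ^ k * N) s hs0, H1_eq_range N s hs0]
    rw [show p ^ k * N = N * p ^ k from Nat.mul_comm _ _,
      sum_range_mul' (fun n => 1 / (n : ℚ_[p]) ^ s) N (p ^ k)]
    rw [Finset.sum_congr rfl fun m (_ : m ∈ range N) =>
      range_split hP1 (fun r => 1 / ((p ^ k * m + r : ℕ) : ℚ_[p]) ^ s)]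
    rw [Finset.sum_add_distrib, mul_add]
    simp only [Finset.mul_sum]
    congr 1
    · refine Finset.sum_congr rfl fun m _ => ?_
      rcases Nat.eq_zero_or_pos m with hm | hm
      · subst hm; simp [zero_pow hs0]
      · have hm0 : ((m : ℚ_[p])) ≠ 0 := Nat.cast_ne_zero.mpr hm.ne'
        push_cast
        field_simp
        ring
    · refine Finset.sum_congr rfl fun m _ => ?_
      refine Finset.sum_congr rfl fun r hr => ?_
      have hPmr : (((p ^ k * m + r : ℕ) : ℚ_[p])) = (r : ℚ_[p]) + (p : ℚ_[p]) ^ k * m := by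
        push_cast; ring
      rw [hPmr, one_div, mul_pow]
      ring
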